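/- Let V₁, V₂ be doubly commuting isometries on H and let M be a closed subspace invariant under both V₁ and V₂ such that the restrictions V₁|_M, V₂|_M are also doubly commuting (i.e., V₁|_M* V₂|_M = V₂|_M V₁|_M* as operators on M). If moreover V₁|_M and V₂|_M are pure, then M = ⊕_{(n₁,n₂)∈ℕ₀²} V₁^{n₁}V₂^{n₂}(W_M), where W_M = (M ⊖ V₁(M)) ∩ (M ⊖ V₂(M)). -/

import Mathlib

open scoped InnerProductSpace
open Filter Topology


set_option maxHeartbeats 1000000 in
open ContinuousLinearMap in
theorem wold_aux {E : Type*} [NormedAddCommGroup E] [InnerProductSpace ℂ E] [CompleteSpace E]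
    (a b : E →L[ℂ] E)
    (h1 : adjoint a * a = 1) (h2 : adjoint b * b = 1)
    (h3 : a * b = b * a)
    (h4 : adjoint a * b = b * adjoint a)
    (hpA : ∀ x : E, Tendsto (fun n : ℕ => (a ^ n) ((adjoint a ^ n) x)) atTop (𝓝 0))
    (hpB : ∀ x : E, Tendsto (fun n : ℕ => (b ^ n) ((adjoint b ^ n) x)) atTop (𝓝 0)) :
    (⨆ p : ℕ × ℕ, (LinearMap.ker (adjoint a).toLinearMap ⊓ LinearMap.ker (adjoint b).toLinearMap).map
        (a ^ p.1 * b ^ p.2).toLinearMap).topologicalClosure = ⊤ ∧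
    (∀ p q : ℕ × ℕ, p ≠ q →
      ∀ w ∈ LinearMap.ker (adjoint a).toLinearMap ⊓ LinearMap.ker (adjoint b).toLinearMap,
      ∀ w' ∈ LinearMap.ker (adjoint a).toLinearMap ⊓ LinearMap.ker (adjoint b).toLinearMap,
      ⟪(a ^ p.1) ((b ^ p.2) w), (a ^ q.1) ((b ^ q.2) w')⟫_ℂ = 0) := by
  -- derived commutation relations
  have h5 : adjoint b * a = a * adjoint b := by
    have := congrArg star h4
    simpa [star_mul, star_eq_adjoint, adjoint_adjoint] using this
  have h6 : adjoint a * adjoint b = adjoint b * adjoint a := by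
    have := congrArg star h3
    simpa [star_mul, star_eq_adjoint, adjoint_adjoint] using this.symm
  -- pointwise helpers
  have pc : ∀ f g : E →L[ℂ] E, f * g = g * f → ∀ v : E, f (g v) = g (f v) := by
    intro f g h v
    rw [← ContinuousLinearMap.mul_apply, h, ContinuousLinearMap.mul_apply]
  have pcpow : ∀ f g : E →L[ℂ] E, f * g = g * f → ∀ (k l : ℕ) (v : E),
      (f ^ k) ((g ^ l) v) = (g ^ l) ((f ^ k) v) := by
    intro f g h k l v
    exact pc _ _ ((Commute.pow_pow (show Commute f g from h) k l).eq) v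
  have pcpow1 : ∀ f g : E →L[ℂ] E, f * g = g * f → ∀ (k : ℕ) (v : E),
      (f ^ k) (g v) = g ((f ^ k) v) := by
    intro f g h k v
    exact pc _ _ ((Commute.pow_left (show Commute f g from h) k).eq) v
  have ha'a : ∀ v : E, adjoint a (a v) = v := by
    intro v; rw [← ContinuousLinearMap.mul_apply, h1, ContinuousLinearMap.one_apply]
  have hb'b : ∀ v : E, adjoint b (b v) = v := by
    intro v; rw [← ContinuousLinearMap.mul_apply, h2, ContinuousLinearMap.one_apply]
  -- commutation of defect operators
  have cPb' : (1 - a * adjoint a) * adjoint b = adjoint b * (1 - a * adjoint a) := by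
    rw [sub_mul, mul_sub, one_mul, mul_one, mul_assoc, h6, ← mul_assoc, ← h5, mul_assoc]
  have cPb : (1 - a * adjoint a) * b = b * (1 - a * adjoint a) := by
    rw [sub_mul, mul_sub, one_mul, mul_one, mul_assoc, h4, ← mul_assoc, h3, mul_assoc]
  have cQa' : (1 - b * adjoint b) * adjoint a = adjoint a * (1 - b * adjoint b) := by
    rw [sub_mul, mul_sub, one_mul, mul_one, mul_assoc, ← h6, ← mul_assoc, ← h4, mul_assoc]
  -- defect annihilations
  have hPa' : ∀ z : E, adjoint a ((1 - a * adjoint a) z) = 0 := by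
    intro z
    simp [ContinuousLinearMap.sub_apply, ContinuousLinearMap.mul_apply,
      ContinuousLinearMap.one_apply, ha'a]
  have hQb' : ∀ z : E, adjoint b ((1 - b * adjoint b) z) = 0 := by
    intro z
    simp [ContinuousLinearMap.sub_apply, ContinuousLinearMap.mul_apply,
      ContinuousLinearMap.one_apply, hb'b]
  -- inner product strips
  have hsA : ∀ u v : E, ⟪a u, a v⟫_ℂ = ⟪u, v⟫_ℂ := by
    intro u v
    rw [← ContinuousLinearMap.adjoint_inner_left, ha'a]
  have hsB : ∀ u v : E, ⟪b u, b v⟫_ℂ = ⟪u, v⟫_ℂ := by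
    intro u v
    rw [← ContinuousLinearMap.adjoint_inner_left, hb'b]
  have hsApow : ∀ (k : ℕ) (u v : E), ⟪(a ^ k) u, (a ^ k) v⟫_ℂ = ⟪u, v⟫_ℂ := by
    intro k
    induction k with
    | zero => simp
    | succ k ih =>
      intro u v
      rw [pow_succ, ContinuousLinearMap.mul_apply, ContinuousLinearMap.mul_apply, ih, hsA]
  have hsBpow : ∀ (k : ℕ) (u v : E), ⟪(b ^ k) u, (b ^ k) v⟫_ℂ = ⟪u, v⟫_ℂ := by
    intro k
    induction k with
    | zero => simp
    | succ k ih =>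
      intro u v
      rw [pow_succ, ContinuousLinearMap.mul_apply, ContinuousLinearMap.mul_apply, ih, hsB]
  constructor
  · -- density part
    rw [Submodule.topologicalClosure_eq_top_iff, Submodule.eq_bot_iff]
    intro x hx
    have hx' : ∀ (n m : ℕ) (w : E), adjoint a w = 0 → adjoint b w = 0 →
        ⟪(a ^ n) ((b ^ m) w), x⟫_ℂ = 0 := by
      intro n m w hwa hwb
      have hmem : (a ^ n * b ^ m) w ∈
          (⨆ p : ℕ × ℕ, (LinearMap.ker (adjoint a).toLinearMap ⊓ LinearMap.ker (adjoint b).toLinearMap).map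
            (a ^ p.1 * b ^ p.2).toLinearMap) := by
        refine Submodule.mem_iSup_of_mem (n, m) ?_
        exact ⟨w, Submodule.mem_inf.mpr ⟨LinearMap.mem_ker.mpr hwa, LinearMap.mem_ker.mpr hwb⟩,
          rfl⟩
      have := (Submodule.mem_orthogonal _ x).mp hx _ hmem
      simpa [ContinuousLinearMap.mul_apply] using this
    have hstep : ∀ m : ℕ,
        ⟪(b ^ m) ((adjoint b ^ m) x), x⟫_ℂ
          = ⟪(b ^ (m + 1)) ((adjoint b ^ (m + 1)) x), x⟫_ℂ := by
      intro m
      set Y : E := (b ^ m) ((adjoint b ^ m) x) - (b ^ (m + 1)) ((adjoint b ^ (m + 1)) x)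
        with hYdef
      -- vector identity
      have hwv : ∀ n : ℕ,
          (a ^ n) ((b ^ m) ((1 - a * adjoint a) ((1 - b * adjoint b)
            ((adjoint b ^ m) ((adjoint a ^ n) x)))))
          = (a ^ n) ((adjoint a ^ n) Y) - (a ^ (n + 1)) ((adjoint a ^ (n + 1)) Y) := by
        intro n
        have hYm : (b ^ m) ((1 - b * adjoint b) ((adjoint b ^ m) x)) = Y := by
          rw [hYdef]
          have e1 : adjoint b ((adjoint b ^ m) x) = (adjoint b ^ (m + 1)) x := by
            rw [pow_succ', ContinuousLinearMap.mul_apply]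
          have e2 : ∀ z : E, (b ^ m) (b z) = (b ^ (m + 1)) z := by
            intro z; rw [pow_succ, ContinuousLinearMap.mul_apply]
          simp only [ContinuousLinearMap.sub_apply, ContinuousLinearMap.mul_apply,
            ContinuousLinearMap.one_apply, map_sub, e1, e2]
        calc (a ^ n) ((b ^ m) ((1 - a * adjoint a) ((1 - b * adjoint b)
              ((adjoint b ^ m) ((adjoint a ^ n) x)))))
            = (a ^ n) ((b ^ m) ((1 - a * adjoint a) ((adjoint a ^ n)
              ((1 - b * adjoint b) ((adjoint b ^ m) x))))) := by
              rw [pcpow (adjoint b) (adjoint a) h6.symm m n x,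
                pcpow1 (adjoint a) (1 - b * adjoint b) cQa'.symm n ((adjoint b ^ m) x)]
          _ = (a ^ n) ((1 - a * adjoint a) ((b ^ m) ((adjoint a ^ n)
              ((1 - b * adjoint b) ((adjoint b ^ m) x))))) := by
              rw [pcpow1 b (1 - a * adjoint a) cPb.symm m]
          _ = (a ^ n) ((1 - a * adjoint a) ((adjoint a ^ n)
              ((b ^ m) ((1 - b * adjoint b) ((adjoint b ^ m) x))))) := by
              rw [pcpow b (adjoint a) h4.symm m n]
          _ = (a ^ n) ((1 - a * adjoint a) ((adjoint a ^ n) Y)) := by rw [hYm]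
          _ = (a ^ n) ((adjoint a ^ n) Y) - (a ^ (n + 1)) ((adjoint a ^ (n + 1)) Y) := by
              have e3 : (1 - a * adjoint a) ((adjoint a ^ n) Y)
                  = (adjoint a ^ n) Y - a ((adjoint a ^ (n + 1)) Y) := by
                have e4 : (adjoint a ^ (n + 1)) Y = adjoint a ((adjoint a ^ n) Y) := by
                  rw [pow_succ', ContinuousLinearMap.mul_apply]
                simp only [ContinuousLinearMap.sub_apply, ContinuousLinearMap.mul_apply,
                  ContinuousLinearMap.one_apply, e4]
              rw [e3, map_sub, show (a ^ (n + 1)) ((adjoint a ^ (n + 1)) Y)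
                  = (a ^ n) (a ((adjoint a ^ (n + 1)) Y)) from by
                rw [pow_succ a n, ContinuousLinearMap.mul_apply]]
      -- telescoping in n
      have key0 : ∀ n : ℕ, ⟪(a ^ n) ((adjoint a ^ n) Y), x⟫_ℂ
          = ⟪(a ^ (n + 1)) ((adjoint a ^ (n + 1)) Y), x⟫_ℂ := by
        intro n
        have hwa : adjoint a ((1 - a * adjoint a) ((1 - b * adjoint b)
            ((adjoint b ^ m) ((adjoint a ^ n) x)))) = 0 := hPa' _
        have hwb : adjoint b ((1 - a * adjoint a) ((1 - b * adjoint b)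
            ((adjoint b ^ m) ((adjoint a ^ n) x)))) = 0 := by
          rw [pc (adjoint b) (1 - a * adjoint a) cPb'.symm, hQb', map_zero]
        have h0 := hx' n m _ hwa hwb
        rw [hwv n, inner_sub_left, sub_eq_zero] at h0
        exact h0
      have hconst : ∀ n : ℕ, ⟪(a ^ n) ((adjoint a ^ n) Y), x⟫_ℂ = ⟪Y, x⟫_ℂ := by
        intro n
        induction n with
        | zero => simp
        | succ n ih => rw [← key0 n]; exact ih
      have hlim : Tendsto (fun n : ℕ => ⟪(a ^ n) ((adjoint a ^ n) Y), x⟫_ℂ) atTop (𝓝 0) := by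
        simpa using (hpA Y).inner (tendsto_const_nhds (x := x))
      have hY0 : ⟪Y, x⟫_ℂ = 0 := by
        have h' : Tendsto (fun _ : ℕ => ⟪Y, x⟫_ℂ) atTop (𝓝 0) := by
          simpa only [hconst] using hlim
        exact tendsto_nhds_unique tendsto_const_nhds h'
      rw [hYdef, inner_sub_left, sub_eq_zero] at hY0
      exact hY0
    have hconstF : ∀ m : ℕ, ⟪(b ^ m) ((adjoint b ^ m) x), x⟫_ℂ = ⟪x, x⟫_ℂ := by
      intro m
      induction m with
      | zero => simp
      | succ m ih => rw [← hstep m]; exact ih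
    have hlimF : Tendsto (fun m : ℕ => ⟪(b ^ m) ((adjoint b ^ m) x), x⟫_ℂ) atTop (𝓝 0) := by
      simpa using (hpB x).inner (tendsto_const_nhds (x := x))
    have hxx : ⟪x, x⟫_ℂ = 0 := by
      have h' : Tendsto (fun _ : ℕ => ⟪x, x⟫_ℂ) atTop (𝓝 0) := by
        simpa only [hconstF] using hlimF
      exact tendsto_nhds_unique tendsto_const_nhds h'
    exact inner_self_eq_zero.mp hxx
  · -- orthogonality part
    have L1 : ∀ w w' : E, adjoint a w = 0 → adjoint b w = 0 → ∀ d e : ℕ,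
        ¬(d = 0 ∧ e = 0) → ⟪w, (a ^ d) ((b ^ e) w')⟫_ℂ = 0 := by
      intro w w' hwa hwb d e hde
      cases d with
      | succ k =>
        rw [pow_succ', ContinuousLinearMap.mul_apply,
          ← ContinuousLinearMap.adjoint_inner_left, hwa, inner_zero_left]
      | zero =>
        cases e with
        | zero => exact absurd ⟨rfl, rfl⟩ hde
        | succ k =>
          simp only [pow_zero, ContinuousLinearMap.one_apply]
          rw [pow_succ', ContinuousLinearMap.mul_apply,
            ← ContinuousLinearMap.adjoint_inner_left, hwb, inner_zero_left]
    have L1' : ∀ w w' : E, adjoint a w = 0 → adjoint b w' = 0 → ∀ d e : ℕ,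
        ¬(d = 0 ∧ e = 0) → ⟪(b ^ e) w, (a ^ d) w'⟫_ℂ = 0 := by
      intro w w' hwa hw'b d e hde
      cases d with
      | succ k =>
        rw [pow_succ', ContinuousLinearMap.mul_apply,
          ← ContinuousLinearMap.adjoint_inner_left,
          (pcpow1 b (adjoint a) h4.symm e w).symm, hwa, map_zero, inner_zero_left]
      | zero =>
        cases e with
        | zero => exact absurd ⟨rfl, rfl⟩ hde
        | succ k =>
          simp only [pow_zero, ContinuousLinearMap.one_apply]
          rw [pow_succ', ContinuousLinearMap.mul_apply,
            ← ContinuousLinearMap.adjoint_inner_right, hw'b, inner_zero_right]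
    have key : ∀ p₁ p₂ q₁ q₂ : ℕ, p₁ ≤ q₁ → (p₁, p₂) ≠ (q₁, q₂) →
        ∀ w w' : E, adjoint a w = 0 → adjoint b w = 0 →
          adjoint a w' = 0 → adjoint b w' = 0 →
        ⟪(a ^ p₁) ((b ^ p₂) w), (a ^ q₁) ((b ^ q₂) w')⟫_ℂ = 0 := by
      intro p₁ p₂ q₁ q₂ hle hne w w' hwa hwb hw'a hw'b
      obtain ⟨d, rfl⟩ := Nat.exists_eq_add_of_le hle
      rw [pow_add a p₁ d, ContinuousLinearMap.mul_apply, hsApow p₁]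
      rcases le_total p₂ q₂ with h | h
      · obtain ⟨e, rfl⟩ := Nat.exists_eq_add_of_le h
        rw [pow_add b p₂ e, ContinuousLinearMap.mul_apply,
          pcpow a b h3 d p₂ ((b ^ e) w'), hsBpow p₂]
        exact L1 w w' hwa hwb d e (by rintro ⟨rfl, rfl⟩; simp at hne)
      · obtain ⟨e, rfl⟩ := Nat.exists_eq_add_of_le h
        rw [pow_add b q₂ e, ContinuousLinearMap.mul_apply,
          pcpow a b h3 d q₂ w', hsBpow q₂]
        exact L1' w w' hwa hw'b d e (by rintro ⟨rfl, rfl⟩; simp at hne)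
    intro p q hpq w hw w' hw'
    have hw1 := LinearMap.mem_ker.mp (Submodule.mem_inf.mp hw).1
    have hw2 := LinearMap.mem_ker.mp (Submodule.mem_inf.mp hw).2
    have hw'1 := LinearMap.mem_ker.mp (Submodule.mem_inf.mp hw').1
    have hw'2 := LinearMap.mem_ker.mp (Submodule.mem_inf.mp hw').2
    rcases le_total p.1 q.1 with h | h
    · exact key p.1 p.2 q.1 q.2 h (by simpa [Prod.ext_iff, not_and] using hpq)
        w w' hw1 hw2 hw'1 hw'2
    · rw [← inner_conj_symm,
        key q.1 q.2 p.1 p.2 h (by simpa [Prod.ext_iff, not_and] using hpq.symm)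
          w' w hw'1 hw'2 hw1 hw2, map_zero]


/-- If the restrictions of doubly commuting isometries to an invariant subspace
`M` are doubly commuting and pure, then `M = ⊕_{(n₁,n₂)} V₁^{n₁}V₂^{n₂}(W_M)`. -/
theorem doubly_commuting_invariant_subspace_decomposition
    {H : Type*} [NormedAddCommGroup H] [InnerProductSpace ℂ H] [CompleteSpace H]
    (V₁ V₂ : H →L[ℂ] H) (hV₁ : ∀ x, ‖V₁ x‖ = ‖x‖) (hV₂ : ∀ x, ‖V₂ x‖ = ‖x‖)
    (hcomm : V₁.comp V₂ = V₂.comp V₁)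
    (hdc : (ContinuousLinearMap.adjoint V₁).comp V₂
      = V₂.comp (ContinuousLinearMap.adjoint V₁))
    (M : Submodule ℂ H) [CompleteSpace M]
    (hM₁ : ∀ x ∈ M, V₁ x ∈ M) (hM₂ : ∀ x ∈ M, V₂ x ∈ M)
    (V₁M V₂M : M →L[ℂ] M)
    (hV₁M : ∀ x : M, (V₁M x : H) = V₁ (x : H)) (hV₂M : ∀ x : M, (V₂M x : H) = V₂ (x : H))
    (hdcM : (ContinuousLinearMap.adjoint V₁M).comp V₂M
      = V₂M.comp (ContinuousLinearMap.adjoint V₁M))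
    (hpure₁ : ∀ x : M, Tendsto
      (fun n : ℕ => (V₁M ^ n) ((ContinuousLinearMap.adjoint V₁M ^ n) x)) atTop (𝓝 0))
    (hpure₂ : ∀ x : M, Tendsto
      (fun n : ℕ => (V₂M ^ n) ((ContinuousLinearMap.adjoint V₂M ^ n) x)) atTop (𝓝 0)) :
    let W_M := LinearMap.ker (ContinuousLinearMap.adjoint V₁M).toLinearMap ⊓
      LinearMap.ker (ContinuousLinearMap.adjoint V₂M).toLinearMap
    (⨆ p : ℕ × ℕ, W_M.map (V₁M ^ p.1 * V₂M ^ p.2).toLinearMap).topologicalClosure = ⊤ ∧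
    (∀ p q : ℕ × ℕ, p ≠ q → ∀ w ∈ W_M, ∀ w' ∈ W_M,
      ⟪(V₁M ^ p.1) ((V₂M ^ p.2) w), (V₁M ^ q.1) ((V₂M ^ q.2) w')⟫_ℂ = 0) := by
  intro W_M
  have hn1 : ∀ x : M, ‖V₁M x‖ = ‖x‖ := by
    intro x
    rw [Submodule.coe_norm, hV₁M, hV₁, ← Submodule.coe_norm]
  have hn2 : ∀ x : M, ‖V₂M x‖ = ‖x‖ := by
    intro x
    rw [Submodule.coe_norm, hV₂M, hV₂, ← Submodule.coe_norm]
  have h1 : ContinuousLinearMap.adjoint V₁M * V₁M = 1 :=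
    (ContinuousLinearMap.norm_map_iff_adjoint_comp_self V₁M).mp hn1
  have h2 : ContinuousLinearMap.adjoint V₂M * V₂M = 1 :=
    (ContinuousLinearMap.norm_map_iff_adjoint_comp_self V₂M).mp hn2
  have h3 : V₁M * V₂M = V₂M * V₁M := by
    ext x
    have hc := DFunLike.congr_fun hcomm (x : H)
    simp only [ContinuousLinearMap.comp_apply] at hc
    rw [ContinuousLinearMap.mul_apply, ContinuousLinearMap.mul_apply,
      hV₁M, hV₂M, hV₂M, hV₁M]
    exact hc
  have h4 : ContinuousLinearMap.adjoint V₁M * V₂M = V₂M * ContinuousLinearMap.adjoint V₁M :=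
    hdcM
  exact wold_aux V₁M V₂M h1 h2 h3 h4 hpure₁ hpure₂
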